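/- Let V be a countably infinite set carrying two linear orders ≤₁ and ≤₂ with the joint extension property: for all finite sets A₁, B₁, A₂, B₂ ⊆ V such that a <₁ b for all a ∈ A₁, b ∈ B₁ and a <₂ b for all a ∈ A₂, b ∈ B₂, there exists x ∈ V with a <₁ x for all a ∈ A₁, x <₁ b for all b ∈ B₁, a <₂ x for all a ∈ A₂, and x <₂ b for all b ∈ B₂. (Such a structure is the double rationals ℚ₂, the homogeneous structure of two independent dense linear orders.) Then its distinguishing number is 2: there exists a coloring c : V → Bool such that the only automorphism g with c ∘ g = c is the identity, while a nontrivial automorphism exists. -/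

import Mathlib

open scoped Classical

/-- A finite partial isomorphism of two double-ordered sets, as a finite set of pairs. -/
private def DRpiso {V : Type*} (le₁ le₂ : V → V → Prop) (p : Finset (V × V)) : Prop :=
  ∀ q ∈ p, ∀ q' ∈ p, (le₁ q.1 q'.1 ↔ le₁ q.2 q'.2) ∧ (le₂ q.1 q'.1 ↔ le₂ q.2 q'.2)

private lemma DRpiso_swap {V : Type*} (le₁ le₂ : V → V → Prop) (p : Finset (V × V))
    (hp : DRpiso le₁ le₂ p) : DRpiso le₁ le₂ (p.image Prod.swap) := by
  intro q hq q' hq'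
  obtain ⟨r, hr, rfl⟩ := Finset.mem_image.1 hq
  obtain ⟨r', hr', rfl⟩ := Finset.mem_image.1 hq'
  exact ⟨(hp r hr r' hr').1.symm, (hp r hr r' hr').2.symm⟩

set_option maxHeartbeats 1000000 in
private lemma DRpiso_extend {V : Type*} (le₁ le₂ : V → V → Prop)
    (h₁ : IsLinearOrder V le₁) (h₂ : IsLinearOrder V le₂)
    (hext : ∀ A₁ B₁ A₂ B₂ : Finset V,
      (∀ a ∈ A₁, ∀ b ∈ B₁, le₁ a b ∧ a ≠ b) →
      (∀ a ∈ A₂, ∀ b ∈ B₂, le₂ a b ∧ a ≠ b) →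
      ∃ x, (∀ a ∈ A₁, le₁ a x ∧ a ≠ x) ∧ (∀ b ∈ B₁, le₁ x b ∧ x ≠ b) ∧
           (∀ a ∈ A₂, le₂ a x ∧ a ≠ x) ∧ (∀ b ∈ B₂, le₂ x b ∧ x ≠ b))
    (p : Finset (V × V)) (x : V) :
    ∃ y, DRpiso le₁ le₂ p → DRpiso le₁ le₂ (insert (x, y) p) := by
  classical
  have refl₁ := h₁.toIsPartialOrder.toIsPreorder.refl
  have refl₂ := h₂.toIsPartialOrder.toIsPreorder.refl
  have trans₁ := h₁.toIsPartialOrder.toIsPreorder.trans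
  have trans₂ := h₂.toIsPartialOrder.toIsPreorder.trans
  have anti₁ := h₁.toIsPartialOrder.toAntisymm.antisymm
  have anti₂ := h₂.toIsPartialOrder.toAntisymm.antisymm
  have tot₁ := h₁.toTotal.total
  have tot₂ := h₂.toTotal.total
  by_cases hd : ∃ y, (x, y) ∈ p
  · obtain ⟨y, hy⟩ := hd
    exact ⟨y, fun hp => by rwa [Finset.insert_eq_self.2 hy]⟩
  push_neg at hd
  by_cases hp : DRpiso le₁ le₂ p
  swap
  · exact ⟨x, fun h => absurd h hp⟩
  have hne1 : ∀ q ∈ p, q.1 ≠ x := by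
    intro q hq h
    exact hd q.2 (by rwa [show (x, q.2) = q from Prod.ext h.symm rfl])
  have prem : ∀ (le : V → V → Prop), (∀ a, le a a) →
      (∀ a b c, le a b → le b c → le a c) →
      (∀ a b, le a b → le b a → a = b) →
      (∀ q ∈ p, ∀ q' ∈ p, (le q.1 q'.1 ↔ le q.2 q'.2)) →
      ∀ a ∈ (p.filter fun q => le q.1 x).image Prod.snd,
      ∀ b ∈ (p.filter fun q => le x q.1).image Prod.snd, le a b ∧ a ≠ b := by
    intro le hrefl htrans hanti hiso a ha b hb
    obtain ⟨q, hq, rfl⟩ := Finset.mem_image.1 ha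
    obtain ⟨r, hr, rfl⟩ := Finset.mem_image.1 hb
    obtain ⟨hqp, hqx⟩ := Finset.mem_filter.1 hq
    obtain ⟨hrp, hrx⟩ := Finset.mem_filter.1 hr
    have h1 : le q.1 r.1 := htrans _ _ _ hqx hrx
    have hne : q.1 ≠ r.1 := by
      intro h; exact hne1 q hqp (hanti _ _ hqx (h ▸ hrx))
    refine ⟨(hiso q hqp r hrp).mp h1, ?_⟩
    intro h
    exact hne (hanti _ _ h1 ((hiso r hrp q hqp).mpr (by rw [h]; exact hrefl r.2)))
  obtain ⟨y, hy1, hy2, hy3, hy4⟩ := hext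
    ((p.filter fun q => le₁ q.1 x).image Prod.snd)
    ((p.filter fun q => le₁ x q.1).image Prod.snd)
    ((p.filter fun q => le₂ q.1 x).image Prod.snd)
    ((p.filter fun q => le₂ x q.1).image Prod.snd)
    (prem le₁ refl₁ trans₁ anti₁ (fun q hq q' hq' => (hp q hq q' hq').1))
    (prem le₂ refl₂ trans₂ anti₂ (fun q hq q' hq' => (hp q hq q' hq').2))
  have key : ∀ (le : V → V → Prop),
      (∀ a b, le a b → le b a → a = b) →
      (∀ a b, le a b ∨ le b a) →
      (∀ a ∈ (p.filter fun q => le q.1 x).image Prod.snd, le a y ∧ a ≠ y) →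
      (∀ b ∈ (p.filter fun q => le x q.1).image Prod.snd, le y b ∧ y ≠ b) →
      ∀ q ∈ p, (le q.1 x ↔ le q.2 y) ∧ (le x q.1 ↔ le y q.2) := by
    intro le hanti htot hbel hab q hq
    have hne : q.1 ≠ x := hne1 q hq
    rcases htot q.1 x with hle | hle
    · have hb := hbel q.2 (Finset.mem_image.2 ⟨q, Finset.mem_filter.2 ⟨hq, hle⟩, rfl⟩)
      refine ⟨⟨fun _ => hb.1, fun _ => hle⟩, ?_, ?_⟩
      · intro h2; exact absurd (hanti _ _ hle h2) hne
      · intro h2; exact absurd (hanti _ _ hb.1 h2) hb.2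
    · have ha := hab q.2 (Finset.mem_image.2 ⟨q, Finset.mem_filter.2 ⟨hq, hle⟩, rfl⟩)
      refine ⟨⟨?_, ?_⟩, fun _ => ha.1, fun _ => hle⟩
      · intro h2; exact absurd (hanti _ _ h2 hle) hne
      · intro h2; exact absurd (hanti _ _ h2 ha.1) (fun hh => ha.2 hh.symm)
  refine ⟨y, fun _ => ?_⟩
  intro q hq q' hq'
  rcases Finset.mem_insert.1 hq with rfl | hq₂ <;> rcases Finset.mem_insert.1 hq' with rfl | hq₂'
  · exact ⟨iff_of_true (refl₁ x) (refl₁ y), iff_of_true (refl₂ x) (refl₂ y)⟩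
  · exact ⟨(key le₁ anti₁ tot₁ hy1 hy2 q' hq₂').2, (key le₂ anti₂ tot₂ hy3 hy4 q' hq₂').2⟩
  · exact ⟨(key le₁ anti₁ tot₁ hy1 hy2 q hq₂).1, (key le₂ anti₂ tot₂ hy3 hy4 q hq₂).1⟩
  · exact hp q hq₂ q' hq₂'

private lemma DRpiso_extend_ran {V : Type*} (le₁ le₂ : V → V → Prop)
    (h₁ : IsLinearOrder V le₁) (h₂ : IsLinearOrder V le₂)
    (hext : ∀ A₁ B₁ A₂ B₂ : Finset V,
      (∀ a ∈ A₁, ∀ b ∈ B₁, le₁ a b ∧ a ≠ b) →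
      (∀ a ∈ A₂, ∀ b ∈ B₂, le₂ a b ∧ a ≠ b) →
      ∃ x, (∀ a ∈ A₁, le₁ a x ∧ a ≠ x) ∧ (∀ b ∈ B₁, le₁ x b ∧ x ≠ b) ∧
           (∀ a ∈ A₂, le₂ a x ∧ a ≠ x) ∧ (∀ b ∈ B₂, le₂ x b ∧ x ≠ b))
    (p : Finset (V × V)) (x : V) :
    ∃ y, DRpiso le₁ le₂ p → DRpiso le₁ le₂ (insert (y, x) p) := by
  classical
  obtain ⟨y, hy⟩ := DRpiso_extend le₁ le₂ h₁ h₂ hext (p.image Prod.swap) x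
  refine ⟨y, fun hp => ?_⟩
  have h2 := DRpiso_swap le₁ le₂ _ (hy (DRpiso_swap le₁ le₂ p hp))
  have h3 : (insert (x, y) (p.image Prod.swap)).image Prod.swap = insert (y, x) p := by
    rw [Finset.image_insert, Finset.image_image]
    simp [Prod.swap_swap_eq]
  rwa [h3] at h2

private lemma DR_exists_auto (V : Type*) [Countable V] [Infinite V]
    (le₁ le₂ : V → V → Prop)
    (h₁ : IsLinearOrder V le₁) (h₂ : IsLinearOrder V le₂)
    (hext : ∀ A₁ B₁ A₂ B₂ : Finset V,
      (∀ a ∈ A₁, ∀ b ∈ B₁, le₁ a b ∧ a ≠ b) →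
      (∀ a ∈ A₂, ∀ b ∈ B₂, le₂ a b ∧ a ≠ b) →
      ∃ x, (∀ a ∈ A₁, le₁ a x ∧ a ≠ x) ∧ (∀ b ∈ B₁, le₁ x b ∧ x ≠ b) ∧
           (∀ a ∈ A₂, le₂ a x ∧ a ≠ x) ∧ (∀ b ∈ B₂, le₂ x b ∧ x ≠ b)) :
    ∃ g : V ≃ V,
      (∀ x y, (le₁ x y ↔ le₁ (g x) (g y)) ∧ (le₂ x y ↔ le₂ (g x) (g y))) ∧
      ∃ v, g v ≠ v := by
  classical
  have refl₁ := h₁.toIsPartialOrder.toIsPreorder.refl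
  have refl₂ := h₂.toIsPartialOrder.toIsPreorder.refl
  have anti₁ := h₁.toIsPartialOrder.toAntisymm.antisymm
  obtain ⟨e, he⟩ := exists_surjective_nat V
  obtain ⟨u, w, huw⟩ := exists_pair_ne V
  choose f hf using fun (p : Finset (V × V)) (x : V) => DRpiso_extend le₁ le₂ h₁ h₂ hext p x
  choose f' hf' using fun (p : Finset (V × V)) (x : V) => DRpiso_extend_ran le₁ le₂ h₁ h₂ hext p x
  obtain ⟨P, hP0, hPs⟩ :
      ∃ P : ℕ → Finset (V × V), P 0 = {(u, w)} ∧ ∀ n, P (n + 1) =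
        insert (f' (insert (e n, f (P n) (e n)) (P n)) (e n), e n)
          (insert (e n, f (P n) (e n)) (P n)) :=
    ⟨fun n => Nat.rec {(u, w)}
      (fun n pn => insert (f' (insert (e n, f pn (e n)) pn) (e n), e n)
        (insert (e n, f pn (e n)) pn)) n, rfl, fun n => rfl⟩
  have hmono : Monotone P := monotone_nat_of_le_succ (fun n => by
    rw [hPs]
    exact (Finset.subset_insert _ _).trans (Finset.subset_insert _ _))
  have hiso : ∀ n, DRpiso le₁ le₂ (P n) := by
    intro n
    induction n with
    | zero =>
      rw [hP0]
      intro q hq q' hq'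
      rw [Finset.mem_singleton] at hq hq'
      subst hq; subst hq'
      exact ⟨iff_of_true (refl₁ u) (refl₁ w), iff_of_true (refl₂ u) (refl₂ w)⟩
    | succ n ih =>
      rw [hPs]
      exact hf' _ _ (hf _ _ ih)
  have hdom : ∀ v, ∃ y, ∃ n, (v, y) ∈ P n := by
    intro v
    obtain ⟨n, rfl⟩ := he v
    exact ⟨f (P n) (e n), n + 1, by
      rw [hPs]
      exact Finset.mem_insert_of_mem (Finset.mem_insert_self _ _)⟩
  have hran : ∀ v, ∃ y, ∃ n, (y, v) ∈ P n := by
    intro v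
    obtain ⟨n, rfl⟩ := he v
    exact ⟨_, n + 1, by rw [hPs]; exact Finset.mem_insert_self _ _⟩
  have hfun : ∀ a b b', (∃ n, (a, b) ∈ P n) → (∃ n, (a, b') ∈ P n) → b = b' := by
    rintro a b b' ⟨n, hn⟩ ⟨m, hm⟩
    have h1 : (a, b) ∈ P (max n m) := hmono (le_max_left n m) hn
    have h2 : (a, b') ∈ P (max n m) := hmono (le_max_right n m) hm
    exact anti₁ _ _ ((hiso _ _ h1 _ h2).1.mp (refl₁ a)) ((hiso _ _ h2 _ h1).1.mp (refl₁ a))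
  have hinj : ∀ a a' b, (∃ n, (a, b) ∈ P n) → (∃ n, (a', b) ∈ P n) → a = a' := by
    rintro a a' b ⟨n, hn⟩ ⟨m, hm⟩
    have h1 : (a, b) ∈ P (max n m) := hmono (le_max_left n m) hn
    have h2 : (a', b) ∈ P (max n m) := hmono (le_max_right n m) hm
    exact anti₁ _ _ ((hiso _ _ h1 _ h2).1.mpr (refl₁ b)) ((hiso _ _ h2 _ h1).1.mpr (refl₁ b))
  choose G hG using hdom
  choose G' hG' using hran
  have hleft : ∀ v, G' (G v) = v := fun v => hinj _ _ _ (hG' (G v)) (hG v)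
  have hright : ∀ v, G (G' v) = v := fun v => hfun _ _ _ (hG (G' v)) (hG' v)
  refine ⟨⟨G, G', hleft, hright⟩, ?_, u, ?_⟩
  · intro x y
    obtain ⟨n, hx⟩ := hG x
    obtain ⟨m, hy⟩ := hG y
    have h1 : (x, G x) ∈ P (max n m) := hmono (le_max_left n m) hx
    have h2 : (y, G y) ∈ P (max n m) := hmono (le_max_right n m) hy
    exact hiso _ _ h1 _ h2
  · show G u ≠ u
    have : G u = w := hfun u _ _ (hG u) ⟨0, by rw [hP0]; exact Finset.mem_singleton_self _⟩
    rw [this]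
    exact fun h => huw h.symm

private lemma DR_exists_coloring (V : Type*) [Countable V] [Infinite V]
    (le₁ le₂ : V → V → Prop)
    (h₁ : IsLinearOrder V le₁) (h₂ : IsLinearOrder V le₂)
    (hext : ∀ A₁ B₁ A₂ B₂ : Finset V,
      (∀ a ∈ A₁, ∀ b ∈ B₁, le₁ a b ∧ a ≠ b) →
      (∀ a ∈ A₂, ∀ b ∈ B₂, le₂ a b ∧ a ≠ b) →
      ∃ x, (∀ a ∈ A₁, le₁ a x ∧ a ≠ x) ∧ (∀ b ∈ B₁, le₁ x b ∧ x ≠ b) ∧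
           (∀ a ∈ A₂, le₂ a x ∧ a ≠ x) ∧ (∀ b ∈ B₂, le₂ x b ∧ x ≠ b)) :
    ∃ c : V → Bool, ∀ g : V ≃ V,
      (∀ x y, (le₁ x y ↔ le₁ (g x) (g y)) ∧ (le₂ x y ↔ le₂ (g x) (g y))) →
      (∀ v, c (g v) = c v) → ∀ v, g v = v := by
  classical
  have anti₁ := h₁.toIsPartialOrder.toAntisymm.antisymm
  have anti₂ := h₂.toIsPartialOrder.toAntisymm.antisymm
  have tot₁ := h₁.toTotal.total
  obtain ⟨e, he⟩ := exists_surjective_nat (V × V)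
  have hnext : ∀ (s : Finset V) (n : ℕ), ∃ x : V,
      (∀ a ∈ s, le₂ a x ∧ a ≠ x) ∧
      ((le₁ (e n).1 (e n).2 ∧ (e n).1 ≠ (e n).2) →
        (le₁ (e n).1 x ∧ (e n).1 ≠ x) ∧ (le₁ x (e n).2 ∧ x ≠ (e n).2)) := by
    intro s n
    by_cases hpair : le₁ (e n).1 (e n).2 ∧ (e n).1 ≠ (e n).2
    · obtain ⟨x, hx1, hx2, hx3, -⟩ := hext {(e n).1} {(e n).2} s ∅ (by simpa using hpair)
        (by simp)
      exact ⟨x, hx3, fun _ => ⟨hx1 _ (Finset.mem_singleton_self _),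
        hx2 _ (Finset.mem_singleton_self _)⟩⟩
    · obtain ⟨x, -, -, hx3, -⟩ := hext ∅ ∅ s ∅ (by simp) (by simp)
      exact ⟨x, hx3, fun h => absurd h hpair⟩
  choose nxt hnxt1 hnxt2 using hnext
  obtain ⟨S, hS0, hSs⟩ : ∃ S : ℕ → Finset V, S 0 = ∅ ∧
      ∀ n, S (n + 1) = insert (nxt (S n) n) (S n) :=
    ⟨fun n => Nat.rec ∅ (fun n sn => insert (nxt sn n) sn) n, rfl, fun n => rfl⟩
  set b : ℕ → V := fun n => nxt (S n) n with hb
  have hSmono : Monotone S := monotone_nat_of_le_succ (fun n => by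
    rw [hSs]; exact Finset.subset_insert _ _)
  have hmemS : ∀ m n, m < n → b m ∈ S n := by
    intro m n h
    exact hSmono h (by rw [hSs]; exact Finset.mem_insert_self _ _)
  have hlt₂ : ∀ m n, m < n → le₂ (b m) (b n) ∧ b m ≠ b n :=
    fun m n h => hnxt1 (S n) n (b m) (hmemS m n h)
  have hbinj : Function.Injective b := by
    intro i j hij
    by_contra hne
    rcases lt_trichotomy i j with h | h | h
    · exact (hlt₂ i j h).2 hij
    · exact hne h
    · exact (hlt₂ j i h).2 hij.symm
  have hidx : ∀ i j, le₂ (b i) (b j) → b i ≠ b j → i < j := by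
    intro i j h hne
    rcases lt_trichotomy i j with h' | h' | h'
    · exact h'
    · exact absurd (congrArg b h') hne
    · exact absurd (anti₂ _ _ h (hlt₂ j i h').1) hne
  have hdense : ∀ x y, le₁ x y → x ≠ y →
      ∃ n, (le₁ x (b n) ∧ x ≠ b n) ∧ (le₁ (b n) y ∧ b n ≠ y) := by
    intro x y hxy hne
    obtain ⟨n, hn⟩ := he (x, y)
    have := hnxt2 (S n) n (by rw [hn]; exact ⟨hxy, hne⟩)
    rw [hn] at this
    exact ⟨n, this⟩
  refine ⟨fun v => decide (∃ n, b n = v), ?_⟩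
  intro g hg hc
  have hcol : ∀ v, (∃ n, b n = g v) ↔ (∃ n, b n = v) := by
    intro v
    have hv := hc v
    simp only [decide_eq_decide] at hv
    exact hv
  have hgb : ∀ n, ∃ m, b m = g (b n) := fun n => (hcol (b n)).mpr ⟨n, rfl⟩
  choose σ hσ using hgb
  have hgb' : ∀ n, ∃ m, b m = g.symm (b n) := by
    intro n
    have h := hcol (g.symm (b n))
    rw [Equiv.apply_symm_apply] at h
    exact h.mp ⟨n, rfl⟩
  choose τ hτ using hgb'
  have hσmono : StrictMono σ := by
    intro i j hij
    have h := hlt₂ i j hij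
    have h2 : le₂ (g (b i)) (g (b j)) ∧ g (b i) ≠ g (b j) :=
      ⟨(hg (b i) (b j)).2.mp h.1, fun hxy => h.2 (g.injective hxy)⟩
    rw [← hσ i, ← hσ j] at h2
    exact hidx _ _ h2.1 h2.2
  have hg' : ∀ x y, le₂ x y → le₂ (g.symm x) (g.symm y) := by
    intro x y hxy
    have h := (hg (g.symm x) (g.symm y)).2
    rw [Equiv.apply_symm_apply, Equiv.apply_symm_apply] at h
    exact h.mpr hxy
  have hτmono : StrictMono τ := by
    intro i j hij
    have h := hlt₂ i j hij
    have h2 : le₂ (g.symm (b i)) (g.symm (b j)) ∧ g.symm (b i) ≠ g.symm (b j) :=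
      ⟨hg' _ _ h.1, fun hxy => h.2 (g.symm.injective hxy)⟩
    rw [← hτ i, ← hτ j] at h2
    exact hidx _ _ h2.1 h2.2
  have hfix : ∀ n, g (b n) = b n := by
    intro n
    have h1 : b (σ (τ n)) = b n := by rw [hσ (τ n), hτ n, Equiv.apply_symm_apply]
    have h2 : σ (τ n) = n := hbinj h1
    have h5 : τ n ≤ σ (τ n) := hσmono.le_apply
    rw [h2] at h5
    have h3 : τ n = n := le_antisymm h5 hτmono.le_apply
    have h4 : b n = g.symm (b n) := by rw [← hτ n, h3]
    conv_lhs => rw [h4]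
    exact Equiv.apply_symm_apply g (b n)
  intro v
  by_contra hne
  rcases tot₁ v (g v) with h | h
  · obtain ⟨n, hA, hB⟩ := hdense v (g v) h (fun hh => hne hh.symm)
    have h2 := (hg v (b n)).1.mp hA.1
    rw [hfix n] at h2
    exact hB.2 (anti₁ _ _ hB.1 h2)
  · obtain ⟨n, hA, hB⟩ := hdense (g v) v h hne
    have h2 := (hg (b n) v).1.mp hB.1
    rw [hfix n] at h2
    exact hA.2 (anti₁ _ _ hA.1 h2)

/-- The double rationals `ℚ₂` (two independent dense linear orders with
the joint extension property) have distinguishing number 2. -/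
theorem double_rationals_distinguishing_number_two
    (V : Type*) [Countable V] [Infinite V]
    (le₁ le₂ : V → V → Prop)
    (h₁ : IsLinearOrder V le₁) (h₂ : IsLinearOrder V le₂)
    (hext : ∀ A₁ B₁ A₂ B₂ : Finset V,
      (∀ a ∈ A₁, ∀ b ∈ B₁, le₁ a b ∧ a ≠ b) →
      (∀ a ∈ A₂, ∀ b ∈ B₂, le₂ a b ∧ a ≠ b) →
      ∃ x, (∀ a ∈ A₁, le₁ a x ∧ a ≠ x) ∧ (∀ b ∈ B₁, le₁ x b ∧ x ≠ b) ∧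
           (∀ a ∈ A₂, le₂ a x ∧ a ≠ x) ∧ (∀ b ∈ B₂, le₂ x b ∧ x ≠ b)) :
    (∃ c : V → Bool, ∀ g : V ≃ V,
        (∀ x y, (le₁ x y ↔ le₁ (g x) (g y)) ∧ (le₂ x y ↔ le₂ (g x) (g y))) →
        (∀ v, c (g v) = c v) → ∀ v, g v = v) ∧
    (∃ g : V ≃ V,
        (∀ x y, (le₁ x y ↔ le₁ (g x) (g y)) ∧ (le₂ x y ↔ le₂ (g x) (g y))) ∧
        ∃ v, g v ≠ v) := by
  exact ⟨DR_exists_coloring V le₁ le₂ h₁ h₂ hext, DR_exists_auto V le₁ le₂ h₁ h₂ hext⟩
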